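/- Define F_n = ∑_{i=1}^{n} (−1)^{n−i} ξ_i² / ∏_{l≠i}(f_l − f_i) and, for 1 ≤ j ≤ n−1, F_j = (1 / ∏_{1≤k≤n−1, k≠j}(a_k − a_j)) · ∑_{i=1}^{n} (−1)^{n−i} (∏_{l≠i}(f_l − a_j)) ξ_i² / ∏_{l≠i}(f_l − f_i). Then for every 1 ≤ i ≤ n: ∑_{j=1}^{n−1} (−1)^i (∏_{1≤k≤n−1, k≠j}(f_i − a_k)) F_j + (−1)^{i+1} (∏_{k=1}^{n−1}(f_i − a_k)) F_n = ξ_i². (This expresses that the explicit formulas for the first integrals F_1, …, F_n of the Liouville manifold invert the defining linear system ∑_j b_{ij} F_j = ξ_i².) -/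

import Mathlib

open Finset Polynomial

lemma prod_neg' (t : Finset ℕ) (g : ℕ → ℝ) :
    ∏ k ∈ t, (-(g k)) = (-1:ℝ)^t.card * ∏ k ∈ t, g k := by
  rw [show (fun k => -(g k)) = fun k => (-1) * g k by funext k; ring]
  rw [Finset.prod_mul_distrib, Finset.prod_const]

lemma lag_eval (t : Finset ℕ) (v : ℕ → ℝ) (hv : Set.InjOn v t) (Q : ℝ[X])
    (hQ : Q.degree < t.card) (x : ℝ) :
    Q.eval x = ∑ j ∈ t, Q.eval (v j) *
      ((∏ k ∈ t.erase j, (x - v k)) / ∏ k ∈ t.erase j, (v j - v k)) := by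
  conv_lhs => rw [Lagrange.eq_interpolate hv hQ]
  rw [Lagrange.interpolate_apply, Polynomial.eval_finset_sum]
  refine Finset.sum_congr rfl fun j hj => ?_
  rw [eval_mul, eval_C]
  congr 1
  unfold Lagrange.basis
  rw [Polynomial.eval_prod, ← Finset.prod_div_distrib]
  refine Finset.prod_congr rfl fun k hk => ?_
  simp [Lagrange.basisDivisor, div_eq_inv_mul]

lemma lag_key (t s : Finset ℕ) (v g : ℕ → ℝ) (hv : Set.InjOn v t)
    (hcard : s.card = t.card) (x : ℝ) :
    ∑ j ∈ t, (∏ l ∈ s, (g l - v j)) *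
      ((∏ k ∈ t.erase j, (x - v k)) / ∏ k ∈ t.erase j, (v j - v k))
    = ∏ l ∈ s, (g l - x) - (-1:ℝ)^t.card * ∏ k ∈ t, (x - v k) := by
  set A : ℝ[X] := ∏ l ∈ s, (X - C (g l)) with hA
  set N : ℝ[X] := ∏ k ∈ t, (X - C (v k)) with hN
  have hAm : A.Monic := monic_prod_of_monic _ _ fun _ _ => monic_X_sub_C _
  have hNm : N.Monic := monic_prod_of_monic _ _ fun _ _ => monic_X_sub_C _
  have hdegA : A.degree = (s.card : ℕ) := by
    rw [hA, degree_prod]; simp [degree_X_sub_C]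
  have hdegN : N.degree = (t.card : ℕ) := by
    rw [hN, degree_prod]; simp [degree_X_sub_C]
  have hANdeg : (A - N).degree < (t.card : ℕ) := by
    rcases eq_or_ne A N with h | h
    · rw [h, sub_self, degree_zero]; exact WithBot.bot_lt_coe _
    · have hd : A.degree = N.degree := by rw [hdegA, hdegN, hcard]
      have hlc : A.leadingCoeff = N.leadingCoeff := by
        rw [hAm.leadingCoeff, hNm.leadingCoeff]
      have := degree_sub_lt hd hAm.ne_zero hlc
      rwa [hdegA, hcard] at this
  set Q : ℝ[X] := C ((-1:ℝ)^t.card) * (A - N) with hQ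
  have hQdeg : Q.degree < (t.card : ℕ) := by
    rw [hQ, degree_C_mul (by positivity)]
    exact hANdeg
  have hevalA : ∀ y : ℝ, A.eval y = ∏ l ∈ s, (y - g l) := by
    intro y; rw [hA, eval_prod]; simp
  have hevalN : ∀ y : ℝ, N.eval y = ∏ k ∈ t, (y - v k) := by
    intro y; rw [hN, eval_prod]; simp
  have hsign : ∀ y : ℝ, (-1:ℝ)^t.card * ∏ l ∈ s, (y - g l) = ∏ l ∈ s, (g l - y) := by
    intro y
    rw [show (∏ l ∈ s, (g l - y)) = ∏ l ∈ s, -(y - g l) by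
      exact Finset.prod_congr rfl fun l _ => by ring, prod_neg', hcard]
  have hevalQ : ∀ y : ℝ, Q.eval y
      = ∏ l ∈ s, (g l - y) - (-1:ℝ)^t.card * ∏ k ∈ t, (y - v k) := by
    intro y
    rw [hQ, eval_mul, eval_C, eval_sub, hevalA, hevalN, mul_sub, hsign]
  have := lag_eval t v hv Q hQdeg x
  rw [hevalQ] at this
  rw [this]
  refine Finset.sum_congr rfl fun j hj => ?_
  have hz : ∏ k ∈ t, (v j - v k) = 0 :=
    Finset.prod_eq_zero hj (by ring)
  rw [hevalQ (v j), hz, mul_zero, sub_zero]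

lemma neg_pow_sub {m n : ℕ} (h : m ≤ n) : (-1:ℝ)^(n-m) = (-1)^n * (-1)^m := by
  have h1 : n - m + 2*m = n + m := by omega
  have h2 : ((-1:ℝ))^(n-m) * ((-1:ℝ))^(2*m) = (-1)^(n+m) := by rw [← pow_add, h1]
  have h3 : ((-1:ℝ))^(2*m) = 1 := by rw [pow_mul]; norm_num
  rw [h3, mul_one] at h2
  rw [h2, pow_add]

theorem stmt_15 (n : ℕ) (hn : 2 ≤ n)
    (f : ℕ → ℝ) (hf : ∀ i, 1 ≤ i → i ≤ n → ∀ j, 1 ≤ j → j ≤ n → i ≠ j → f i ≠ f j)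
    (a : ℕ → ℝ) (ha : ∀ i, 1 ≤ i → i ≤ n - 1 → ∀ j, 1 ≤ j → j ≤ n - 1 → i ≠ j → a i ≠ a j)
    (ξ : ℕ → ℝ) (F : ℕ → ℝ)
    (hFn : F n = ∑ i ∈ Finset.Icc 1 n,
      (-1 : ℝ) ^ (n - i) * ξ i ^ 2 / ∏ l ∈ (Finset.Icc 1 n).erase i, (f l - f i))
    (hFj : ∀ j, 1 ≤ j → j ≤ n - 1 → F j =
      (1 / ∏ k ∈ (Finset.Icc 1 (n - 1)).erase j, (a k - a j)) *
        ∑ i ∈ Finset.Icc 1 n,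
          (-1 : ℝ) ^ (n - i) * (∏ l ∈ (Finset.Icc 1 n).erase i, (f l - a j)) * ξ i ^ 2 /
            ∏ l ∈ (Finset.Icc 1 n).erase i, (f l - f i)) :
    ∀ i, 1 ≤ i → i ≤ n →
      (∑ j ∈ Finset.Icc 1 (n - 1),
        (-1 : ℝ) ^ i * (∏ k ∈ (Finset.Icc 1 (n - 1)).erase j, (f i - a k)) * F j) +
        (-1 : ℝ) ^ (i + 1) * (∏ k ∈ Finset.Icc 1 (n - 1), (f i - a k)) * F n = ξ i ^ 2 := by
  intro i hi1 hin
  rw [hFn, Finset.sum_congr rfl (fun j hj => by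
    rw [hFj j (Finset.mem_Icc.mp hj).1 (Finset.mem_Icc.mp hj).2])]
  simp only [Finset.mul_sum]
  rw [Finset.sum_comm, ← Finset.sum_add_distrib]
  have key : ∀ m ∈ Finset.Icc 1 n,
      (∑ j ∈ Finset.Icc 1 (n-1),
        (-1:ℝ)^i * (∏ k ∈ (Finset.Icc 1 (n-1)).erase j, (f i - a k)) *
          ((1 / ∏ k ∈ (Finset.Icc 1 (n-1)).erase j, (a k - a j)) *
            ((-1:ℝ)^(n-m) * (∏ l ∈ (Finset.Icc 1 n).erase m, (f l - a j)) * ξ m ^ 2 /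
              ∏ l ∈ (Finset.Icc 1 n).erase m, (f l - f m))))
        + (-1:ℝ)^(i+1) * (∏ k ∈ Finset.Icc 1 (n-1), (f i - a k)) *
            ((-1:ℝ)^(n-m) * ξ m ^ 2 / ∏ l ∈ (Finset.Icc 1 n).erase m, (f l - f m))
      = if m = i then ξ i ^ 2 else 0 := by
    intro m hm
    obtain ⟨hm1, hmn⟩ := Finset.mem_Icc.mp hm
    have hct : (Finset.Icc 1 (n-1)).card = n - 1 := by
      rw [Nat.card_Icc]; omega
    have haInj : Set.InjOn a (Finset.Icc 1 (n-1)) := by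
      intro x hx y hy hxy
      by_contra hne
      rw [Finset.mem_coe, Finset.mem_Icc] at hx hy
      exact ha x hx.1 hx.2 y hy.1 hy.2 hne hxy
    have hW : (∏ l ∈ (Finset.Icc 1 n).erase m, (f l - f m)) ≠ 0 := by
      rw [Finset.prod_ne_zero_iff]
      intro l hl
      obtain ⟨hlm, hln⟩ := Finset.mem_erase.mp hl
      rw [Finset.mem_Icc] at hln
      exact sub_ne_zero.mpr (hf l hln.1 hln.2 m hm1 hmn hlm)
    have hstep : ∀ j ∈ Finset.Icc 1 (n-1),
        (-1:ℝ)^i * (∏ k ∈ (Finset.Icc 1 (n-1)).erase j, (f i - a k)) *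
          ((1 / ∏ k ∈ (Finset.Icc 1 (n-1)).erase j, (a k - a j)) *
            ((-1:ℝ)^(n-m) * (∏ l ∈ (Finset.Icc 1 n).erase m, (f l - a j)) * ξ m ^ 2 /
              ∏ l ∈ (Finset.Icc 1 n).erase m, (f l - f m)))
        = ((-1:ℝ)^i * (-1:ℝ)^(n-2) * ((-1:ℝ)^(n-m) * ξ m ^ 2 /
              ∏ l ∈ (Finset.Icc 1 n).erase m, (f l - f m))) *
            ((∏ l ∈ (Finset.Icc 1 n).erase m, (f l - a j)) *
              ((∏ k ∈ ((Finset.Icc 1 (n-1)).erase j), (f i - a k)) /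
                ∏ k ∈ ((Finset.Icc 1 (n-1)).erase j), (a j - a k))) := by
      intro j hj
      have hDj : (∏ k ∈ (Finset.Icc 1 (n-1)).erase j, (a k - a j))
          = (-1:ℝ)^(n-2) * ∏ k ∈ (Finset.Icc 1 (n-1)).erase j, (a j - a k) := by
        rw [show (∏ k ∈ (Finset.Icc 1 (n-1)).erase j, (a k - a j))
            = ∏ k ∈ (Finset.Icc 1 (n-1)).erase j, -((a j - a k)) from
          Finset.prod_congr rfl fun k _ => by ring, prod_neg',
          Finset.card_erase_of_mem hj, hct]
        congr 2
      rw [hDj, one_div, mul_inv,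
        show ((-1:ℝ)^(n-2))⁻¹ = (-1:ℝ)^(n-2) from by
          rcases neg_one_pow_eq_or ℝ (n-2) with h|h <;> rw [h] <;> norm_num]
      ring
    rw [Finset.sum_congr rfl hstep, ← Finset.mul_sum]
    have hcard' : ((Finset.Icc 1 n).erase m).card = (Finset.Icc 1 (n-1)).card := by
      rw [Finset.card_erase_of_mem hm, hct, Nat.card_Icc]
      omega
    rw [lag_key (Finset.Icc 1 (n-1)) ((Finset.Icc 1 n).erase m) a f haInj hcard' (f i), hct]
    rw [neg_pow_sub hmn, neg_pow_sub hn, neg_pow_sub (by omega : 1 ≤ n), pow_succ]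
    by_cases him : m = i
    · subst him
      rw [if_pos rfl]
      rcases neg_one_pow_eq_or ℝ n with h1|h1 <;> rcases neg_one_pow_eq_or ℝ m with h2|h2 <;>
        rw [h1, h2] <;> field_simp [hW, h1, h2] <;> (try ring) <;> (simp only [h1, h2]; try ring)
    · rw [if_neg him]
      have hP : ∏ l ∈ (Finset.Icc 1 n).erase m, (f l - f i) = 0 :=
        Finset.prod_eq_zero (Finset.mem_erase.mpr ⟨fun h => him h.symm,
          Finset.mem_Icc.mpr ⟨hi1, hin⟩⟩) (sub_self _)
      rw [hP]
      rcases neg_one_pow_eq_or ℝ n with h1|h1 <;> rcases neg_one_pow_eq_or ℝ m with h2|h2 <;>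
        rcases neg_one_pow_eq_or ℝ i with h3|h3 <;>
        rw [h1, h2, h3] <;> field_simp [hW, h1, h2, h3] <;> (try ring) <;> (simp only [h1, h2, h3]; try ring)
  rw [Finset.sum_congr rfl key, Finset.sum_ite_eq' (Finset.Icc 1 n) i (fun _ => ξ i ^ 2),
    if_pos (Finset.mem_Icc.mpr ⟨hi1, hin⟩)]
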